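/- Let G be a D-regular Bonnet-Myers sharp graph of diameter L, x_0 a pole, and x_1 a neighbor of x_0. Then the out-degree of x_1 with respect to x_0 equals D − 2D/L + 1 and the spherical degree equals 2D/L − 2. In particular, the edge x_0 ~ x_1 lies in exactly 2D/L − 2 triangles. -/

import Mathlib

open Finset

namespace BMS

open scoped Classical

variable {V : Type*}

/-- The uniform probability measure on the closed 1-ball of `x` in a `D`-regular graph. -/
noncomputable def mu (G : SimpleGraph V) (D : ℕ) (x : V) : V → ℝ :=
  fun v => if G.dist x v ≤ 1 then 1 / (D + 1) else 0

/-- The L¹-Wasserstein distance between `μ_x` and `μ_y`, as an infimum over transport plans. -/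
noncomputable def W1 (G : SimpleGraph V) [Fintype V] (D : ℕ) (x y : V) : ℝ :=
  sInf { c : ℝ | ∃ π : V → V → ℝ,
    (∀ u v, 0 ≤ π u v) ∧
    (∀ u, ∑ v, π u v = mu G D x u) ∧
    (∀ v, ∑ u, π u v = mu G D y v) ∧
    c = ∑ u, ∑ v, (G.dist u v : ℝ) * π u v }

/-- Ollivier Ricci curvature (Lin–Lu–Yau normalization for regular graphs). -/
noncomputable def kappa (G : SimpleGraph V) [Fintype V] (D : ℕ) (x y : V) : ℝ :=
  ((D + 1) / D) * (1 - W1 G D x y)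

/-- `G` is Bonnet–Myers sharp: the infimum of the curvature over edges equals `2 / L`. -/
def BMSharp (G : SimpleGraph V) [Fintype V] (D L : ℕ) : Prop :=
  sInf { k : ℝ | ∃ x y, G.Adj x y ∧ k = kappa G D x y } = 2 / (L : ℝ)

/-- Number of neighbors of `y` at distance `k` from `x0`. -/
noncomputable def sphDeg (G : SimpleGraph V) [Fintype V] (x0 y : V) (k : ℕ) : ℕ :=
  (Finset.univ.filter (fun v => G.Adj y v ∧ G.dist x0 v = k)).card

/-- Number of triangles containing the edge `x ~ y` (common neighbors of `x` and `y`). -/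
noncomputable def tri (G : SimpleGraph V) [Fintype V] (x y : V) : ℕ :=
  (Finset.univ.filter (fun v => G.Adj x v ∧ G.Adj y v)).card

/-- A good optimal transport map from `B_1(a)` to `B_1(b)`: a bijection between the 1-balls,
fixing exactly the vertices of `B_1(a) ∩ B_1(b)` (among the domain), whose cost realizes
the Wasserstein distance `W1 (μ_a, μ_b)`. -/
def goodMap (G : SimpleGraph V) [Fintype V] (D : ℕ) (a b : V) (T : V → V) : Prop :=
  Set.BijOn T {v | G.dist a v ≤ 1} {v | G.dist b v ≤ 1} ∧
  (∀ v, G.dist a v ≤ 1 → (T v = v ↔ G.dist b v ≤ 1)) ∧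
  (1 / (D + 1 : ℝ)) *
      ∑ v ∈ Finset.univ.filter (fun v => G.dist a v ≤ 1), (G.dist v (T v) : ℝ) =
    W1 G D a b

section Aux

variable [Fintype V] {G : SimpleGraph V} {D L : ℕ}

lemma ball_filter (hconn : G.Connected) (x : V) :
    (univ.filter (fun v => G.dist x v ≤ 1)) = insert x (G.neighborFinset x) := by
  ext v
  simp only [mem_filter, mem_univ, true_and, mem_insert, SimpleGraph.mem_neighborFinset]
  constructor
  · intro h
    rcases Nat.le_one_iff_eq_zero_or_eq_one.mp h with h0 | h1
    · exact Or.inl (hconn.dist_eq_zero_iff.mp h0).symm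
    · exact Or.inr (SimpleGraph.dist_eq_one_iff_adj.mp h1)
  · rintro (rfl | hadj)
    · simp [SimpleGraph.dist_self]
    · exact le_of_eq (SimpleGraph.dist_eq_one_iff_adj.mpr hadj)

lemma expect_eq (hconn : G.Connected) (x : V) (f : V → ℝ) :
    ∑ v, f v * mu G D x v = (f x + ∑ v ∈ G.neighborFinset x, f v) / ((D : ℝ) + 1) := by
  have h1 : ∑ v, f v * mu G D x v
      = ∑ v ∈ univ.filter (fun v => G.dist x v ≤ 1), f v * (1 / ((D : ℝ) + 1)) := by
    rw [Finset.sum_filter]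
    refine Finset.sum_congr rfl fun v _ => ?_
    unfold mu
    split_ifs <;> simp
  rw [h1, ball_filter hconn, Finset.sum_insert (by simp), ← Finset.sum_mul]
  ring

lemma mu_sum_one (hconn : G.Connected) (hreg : G.IsRegularOfDegree D) (x : V) :
    ∑ v, mu G D x v = 1 := by
  have h := expect_eq (D := D) hconn x (fun _ => 1)
  simp only [one_mul] at h
  rw [h, Finset.sum_const, ← SimpleGraph.degree, hreg x]
  have : ((D : ℝ) + 1) ≠ 0 := by positivity
  field_simp
  ring

lemma mu_nonneg (G : SimpleGraph V) (D : ℕ) (x v : V) : 0 ≤ mu G D x v := by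
  unfold mu; split_ifs <;> positivity

lemma lip_le_W1 (hconn : G.Connected) (hreg : G.IsRegularOfDegree D) (a b : V)
    (f : V → ℝ) (hf : ∀ u v, f v - f u ≤ (G.dist u v : ℝ)) :
    (∑ v, f v * mu G D b v) - (∑ v, f v * mu G D a v) ≤ W1 G D a b := by
  apply le_csInf
  · refine ⟨_, fun u v => mu G D a u * mu G D b v, fun u v => by
      have := mu_nonneg G D a u; have := mu_nonneg G D b v; positivity, ?_, ?_, rfl⟩
    · intro u
      rw [← Finset.mul_sum, mu_sum_one hconn hreg, mul_one]
    · intro v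
      rw [← Finset.sum_mul, mu_sum_one hconn hreg, one_mul]
  · rintro c ⟨π, hpos, hma, hmb, rfl⟩
    have key : ∑ u, ∑ v, (f v - f u) * π u v ≤ ∑ u, ∑ v, (G.dist u v : ℝ) * π u v := by
      refine Finset.sum_le_sum fun u _ => Finset.sum_le_sum fun v _ => ?_
      exact mul_le_mul_of_nonneg_right (hf u v) (hpos u v)
    have expand : ∑ u, ∑ v, (f v - f u) * π u v
        = (∑ v, f v * mu G D b v) - (∑ v, f v * mu G D a v) := by
      have e1 : ∑ u, ∑ v, (f v - f u) * π u v
          = (∑ u, ∑ v, f v * π u v) - (∑ u, ∑ v, f u * π u v) := by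
        rw [← Finset.sum_sub_distrib]
        refine Finset.sum_congr rfl fun u _ => ?_
        rw [← Finset.sum_sub_distrib]
        refine Finset.sum_congr rfl fun v _ => by ring
      rw [e1, Finset.sum_comm]
      congr 1
      · refine Finset.sum_congr rfl fun v _ => ?_
        rw [← Finset.mul_sum, hmb v, mul_comm]
      · refine Finset.sum_congr rfl fun u _ => ?_
        rw [← Finset.mul_sum, hma u, mul_comm]
    linarith [key, le_of_eq expand.symm]

lemma W1_edge_le (hD : 0 < D) (hL : 0 < L) (hBM : BMSharp G D L)
    {a b : V} (hab : G.Adj a b) :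
    W1 G D a b ≤ 1 - 2 * D / (((D : ℝ) + 1) * L) := by
  have hmem : kappa G D a b ∈ {k : ℝ | ∃ x y, G.Adj x y ∧ k = kappa G D x y} :=
    ⟨a, b, hab, rfl⟩
  have hbdd : BddBelow {k : ℝ | ∃ x y, G.Adj x y ∧ k = kappa G D x y} := by
    have hsub : {k : ℝ | ∃ x y, G.Adj x y ∧ k = kappa G D x y}
        ⊆ Set.range (fun p : V × V => kappa G D p.1 p.2) := by
      rintro k ⟨x, y, _, rfl⟩; exact ⟨(x, y), rfl⟩
    exact ((Set.finite_range _).subset hsub).bddBelow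
  have h2 : 2 / (L : ℝ) ≤ kappa G D a b := hBM ▸ csInf_le hbdd hmem
  unfold kappa at h2
  have hD' : (0 : ℝ) < D := by exact_mod_cast hD
  have hL' : (0 : ℝ) < L := by exact_mod_cast hL
  have hD1 : (0 : ℝ) < (D : ℝ) + 1 := by linarith
  have h3 : 2 / (L : ℝ) * ((D : ℝ) / ((D : ℝ) + 1)) ≤ 1 - W1 G D a b := by
    calc 2 / (L : ℝ) * ((D : ℝ) / ((D : ℝ) + 1))
        ≤ (((D : ℝ) + 1) / D * (1 - W1 G D a b)) * ((D : ℝ) / ((D : ℝ) + 1)) := by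
          apply mul_le_mul_of_nonneg_right h2; positivity
      _ = 1 - W1 G D a b := by field_simp
  have h4 : 2 * (D : ℝ) / (((D : ℝ) + 1) * L) = 2 / (L : ℝ) * ((D : ℝ) / ((D : ℝ) + 1)) := by
    field_simp
  linarith [h3, le_of_eq h4]

lemma tele {F : ℕ → ℝ} {w : ℝ} :
    ∀ n : ℕ, (∀ i, i < n → F (i + 1) - F i ≤ w) → F n - F 0 ≤ n * w := by
  intro n
  induction n with
  | zero => intro _; simp
  | succ n ih =>
    intro h
    have h1 := h n (by omega)
    have h2 := ih fun i hi => h i (by omega)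
    push_cast
    linarith

end Aux

theorem stmt [Fintype V] (G : SimpleGraph V) (hconn : G.Connected)
    (D L : ℕ) (hD : 0 < D) (hL : 0 < L) (hreg : G.IsRegularOfDegree D)
    (hdiam : G.diam = L) (hBM : BMSharp G D L)
    (x0 : V) (hpole : ∃ p, G.dist x0 p = L)
    (x1 : V) (hx1 : G.Adj x0 x1) :
    (sphDeg G x0 x1 2 : ℝ) = D - 2 * D / L + 1 ∧
    (sphDeg G x0 x1 1 : ℝ) = 2 * D / L - 2 ∧
    (tri G x0 x1 : ℝ) = 2 * D / L - 2 := by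
  classical
  obtain ⟨z, hz⟩ := hpole
  have hmem : ∀ a v : V, v ∈ G.neighborFinset a ↔ G.Adj a v := fun a v =>
    SimpleGraph.mem_neighborFinset G a v
  have hD' : (0 : ℝ) < D := by exact_mod_cast hD
  have hL' : (0 : ℝ) < L := by exact_mod_cast hL
  have hD1 : (0 : ℝ) < (D : ℝ) + 1 := by linarith
  set c : ℝ := 2 * D / (((D : ℝ) + 1) * L) with hc_def
  have hc' : c * ((D : ℝ) * L) + c * (L : ℝ) = 2 * D := by
    have h0 : c * (((D : ℝ) + 1) * L) = 2 * D := by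
      rw [hc_def]; field_simp
    ring_nf at h0 ⊢
    linarith
  have hedge : ∀ {a b : V}, G.Adj a b → W1 G D a b ≤ 1 - c := by
    intro a b hab
    rw [hc_def]
    exact W1_edge_le hD hL hBM hab
  -- Lipschitz functions
  set f₁ : V → ℝ := fun v => (G.dist v z : ℝ) with hf₁_def
  have hf₁ : ∀ u v, f₁ v - f₁ u ≤ (G.dist u v : ℝ) := by
    intro u v
    have h := hconn.dist_triangle (u := v) (v := u) (w := z)
    rw [SimpleGraph.dist_comm (u := v) (v := u)] at h
    have h' : (G.dist v z : ℝ) ≤ (G.dist u v : ℝ) + (G.dist u z : ℝ) := by exact_mod_cast h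
    simp only [hf₁_def]
    linarith
  set f₂ : V → ℝ := fun v => (G.dist x0 v : ℝ) with hf₂_def
  have hf₂ : ∀ u v, f₂ v - f₂ u ≤ (G.dist u v : ℝ) := by
    intro u v
    have h := hconn.dist_triangle (u := x0) (v := u) (w := v)
    have h' : (G.dist x0 v : ℝ) ≤ (G.dist x0 u : ℝ) + (G.dist u v : ℝ) := by exact_mod_cast h
    simp only [hf₂_def]
    linarith
  -- distance facts
  have tri1 : ∀ v, G.Adj x0 v → L ≤ 1 + G.dist v z := by
    intro v hv
    have h := hconn.dist_triangle (u := x0) (v := v) (w := z)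
    rw [hz, SimpleGraph.dist_eq_one_iff_adj.mpr hv] at h
    exact h
  have triz : ∀ v, G.Adj z v → L ≤ G.dist x0 v + 1 := by
    intro v hv
    have h := hconn.dist_triangle (u := x0) (v := v) (w := z)
    rw [hz, SimpleGraph.dist_comm (u := v) (v := z),
      SimpleGraph.dist_eq_one_iff_adj.mpr hv] at h
    exact h
  -- expectations
  have hNx0 : ∑ v ∈ G.neighborFinset x0, (G.dist x0 v : ℝ) = (D : ℝ) := by
    have h1 : ∑ v ∈ G.neighborFinset x0, (G.dist x0 v : ℝ)
        = ∑ v ∈ G.neighborFinset x0, (1 : ℝ) := by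
      refine Finset.sum_congr rfl fun v hv => ?_
      rw [SimpleGraph.dist_eq_one_iff_adj.mpr ((hmem _ _).mp hv)]
      norm_num
    rw [h1, Finset.sum_const, ← SimpleGraph.degree, hreg x0]
    simp
  have hNz : ∑ v ∈ G.neighborFinset z, (G.dist v z : ℝ) = (D : ℝ) := by
    have h1 : ∑ v ∈ G.neighborFinset z, (G.dist v z : ℝ)
        = ∑ v ∈ G.neighborFinset z, (1 : ℝ) := by
      refine Finset.sum_congr rfl fun v hv => ?_
      rw [SimpleGraph.dist_comm,
        SimpleGraph.dist_eq_one_iff_adj.mpr ((hmem _ _).mp hv)]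
      norm_num
    rw [h1, Finset.sum_const, ← SimpleGraph.degree, hreg z]
    simp
  set S0 : ℝ := ∑ v ∈ G.neighborFinset x0, (G.dist v z : ℝ) with hS0_def
  set Sz : ℝ := ∑ v ∈ G.neighborFinset z, (G.dist x0 v : ℝ) with hSz_def
  set Sig1 : ℝ := ∑ v ∈ G.neighborFinset x1, (G.dist x0 v : ℝ) with hSig1_def
  have Ex0f1 : ∑ v, f₁ v * mu G D x0 v = ((L : ℝ) + S0) / ((D : ℝ) + 1) := by
    rw [expect_eq hconn x0 f₁]
    simp only [hf₁_def, hz]; rfl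
  have Ezf1 : ∑ v, f₁ v * mu G D z v = (D : ℝ) / ((D : ℝ) + 1) := by
    rw [expect_eq hconn z f₁]
    simp only [hf₁_def, SimpleGraph.dist_self, Nat.cast_zero, hNz, zero_add]
  have Ex0f2 : ∑ v, f₂ v * mu G D x0 v = (D : ℝ) / ((D : ℝ) + 1) := by
    rw [expect_eq hconn x0 f₂]
    simp only [hf₂_def, SimpleGraph.dist_self, Nat.cast_zero, hNx0, zero_add]
  have Ex1f2 : ∑ v, f₂ v * mu G D x1 v = (1 + Sig1) / ((D : ℝ) + 1) := by
    rw [expect_eq hconn x1 f₂]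
    simp only [hf₂_def, SimpleGraph.dist_eq_one_iff_adj.mpr hx1, Nat.cast_one]; rfl
  have Ezf2 : ∑ v, f₂ v * mu G D z v = ((L : ℝ) + Sz) / ((D : ℝ) + 1) := by
    rw [expect_eq hconn z f₂]
    simp only [hf₂_def, hz]; rfl
  have divstep : ∀ X Y R : ℝ, X / ((D : ℝ) + 1) - Y / ((D : ℝ) + 1) ≤ R →
      X - Y ≤ R * ((D : ℝ) + 1) := by
    intro X Y R h
    rw [← sub_div] at h
    exact (div_le_iff₀ hD1).mp h
  -- Argument 1 : every neighbor of x0 is at distance L-1 from z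
  obtain ⟨q, hq⟩ := hconn.exists_walk_length_eq_dist x0 z
  have hr : q.reverse.length = L := by rw [SimpleGraph.Walk.length_reverse, hq, hz]
  have harg1 : (∑ v, f₁ v * mu G D x0 v) - (∑ v, f₁ v * mu G D z v)
      ≤ (L : ℝ) * (1 - c) := by
    have key := tele (F := fun i => ∑ v, f₁ v * mu G D (q.reverse.getVert i) v)
      (w := 1 - c) q.reverse.length (fun i hi =>
        le_trans (lip_le_W1 hconn hreg _ _ f₁ hf₁)
          (hedge (q.reverse.adj_getVert_succ hi)))
    simp only [SimpleGraph.Walk.getVert_length, SimpleGraph.Walk.getVert_zero] at key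
    rw [hr] at key
    exact key
  have hS0le : S0 ≤ (D : ℝ) * L - D := by
    rw [Ex0f1, Ezf1] at harg1
    have k1 := divstep _ _ _ harg1
    have hcc : c * ((D : ℝ) * L) + c * (L : ℝ) = 2 * D := hc'
    ring_nf at k1 hcc ⊢
    linarith
  have hx1z : G.dist x1 z = L - 1 := by
    have hge : L ≤ 1 + G.dist x1 z := tri1 x1 hx1
    have hlt : G.dist x1 z < L := by
      by_contra hxx
      push_neg at hxx
      have hstrict : (D : ℝ) * ((L : ℝ) - 1) < S0 := by
        have hsum := Finset.sum_lt_sum (s := G.neighborFinset x0)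
          (f := fun _ => (L : ℝ) - 1) (g := fun v => (G.dist v z : ℝ))
          (fun v hv => by
            have := tri1 v ((hmem _ _).mp hv)
            have : (L : ℝ) ≤ 1 + (G.dist v z : ℝ) := by exact_mod_cast this
            show (L : ℝ) - 1 ≤ (G.dist v z : ℝ)
            linarith)
          ⟨x1, (hmem _ _).mpr hx1, by
            have : (L : ℝ) ≤ (G.dist x1 z : ℝ) := by exact_mod_cast hxx
            show (L : ℝ) - 1 < (G.dist x1 z : ℝ)
            linarith⟩
        rw [Finset.sum_const, ← SimpleGraph.degree, hreg x0] at hsum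
        rw [hS0_def]
        calc (D : ℝ) * ((L : ℝ) - 1) = D • ((L : ℝ) - 1) := by simp
        _ < _ := hsum
      linarith
    omega
  -- Argument 2 : telescoping along a geodesic from x1 to z
  obtain ⟨p, hp⟩ := hconn.exists_walk_length_eq_dist x1 z
  have hplen : p.length = L - 1 := by rw [hp, hx1z]
  have harg2 : (∑ v, f₂ v * mu G D z v) - (∑ v, f₂ v * mu G D x1 v)
      ≤ ((L : ℝ) - 1) * (1 - c) := by
    have key := tele (F := fun i => ∑ v, f₂ v * mu G D (p.getVert i) v)
      (w := 1 - c) p.length (fun i hi =>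
        le_trans (lip_le_W1 hconn hreg _ _ f₂ hf₂)
          (hedge (p.adj_getVert_succ hi)))
    simp only [SimpleGraph.Walk.getVert_length, SimpleGraph.Walk.getVert_zero] at key
    rw [hplen, Nat.cast_sub hL, Nat.cast_one] at key
    exact key
  have harg3 : (∑ v, f₂ v * mu G D x1 v) - (∑ v, f₂ v * mu G D x0 v) ≤ 1 - c :=
    le_trans (lip_le_W1 hconn hreg x0 x1 f₂ hf₂) (hedge hx1)
  have hSzge : (D : ℝ) * ((L : ℝ) - 1) ≤ Sz := by
    have hsum := Finset.sum_le_sum (s := G.neighborFinset z)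
      (f := fun _ => (L : ℝ) - 1) (g := fun v => (G.dist x0 v : ℝ))
      (fun v hv => by
        have := triz v ((hmem _ _).mp hv)
        have : (L : ℝ) ≤ (G.dist x0 v : ℝ) + 1 := by exact_mod_cast this
        show (L : ℝ) - 1 ≤ (G.dist x0 v : ℝ)
        linarith)
    rw [Finset.sum_const, ← SimpleGraph.degree, hreg z] at hsum
    rw [hSz_def]
    calc (D : ℝ) * ((L : ℝ) - 1) = D • ((L : ℝ) - 1) := by simp
    _ ≤ _ := hsum
  -- pin down Sig1
  have hSig1 : Sig1 = 2 * D - ((D : ℝ) + 1) * c := by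
    rw [Ezf2, Ex1f2] at harg2
    rw [Ex1f2, Ex0f2] at harg3
    have k2 := divstep _ _ _ harg2
    have k3 := divstep _ _ _ harg3
    have hcc : c * ((D : ℝ) * L) + c * (L : ℝ) = 2 * D := hc'
    have hSzge' : (D : ℝ) * ((L : ℝ) - 1) ≤ Sz := hSzge
    ring_nf at k2 k3 hcc hSzge' ⊢
    linarith
  have hcL : ((D : ℝ) + 1) * c = 2 * D / (L : ℝ) := by
    rw [hc_def]
    field_simp
  -- counting
  set N := G.neighborFinset x1 with hN_def
  have hle2 : ∀ v ∈ N, G.dist x0 v ≤ 2 := by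
    intro v hv
    have h := hconn.dist_triangle (u := x0) (v := x1) (w := v)
    rw [SimpleGraph.dist_eq_one_iff_adj.mpr hx1,
      SimpleGraph.dist_eq_one_iff_adj.mpr ((hmem _ _).mp hv)] at h
    exact h
  have hA0 : N.filter (fun v => G.dist x0 v = 0) = {x0} := by
    ext v
    simp only [Finset.mem_filter, Finset.mem_singleton, hN_def,
      SimpleGraph.mem_neighborFinset]
    constructor
    · rintro ⟨_, h0⟩
      exact (hconn.dist_eq_zero_iff.mp h0).symm
    · rintro rfl
      exact ⟨hx1.symm, SimpleGraph.dist_self⟩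
  set B := N.filter (fun v => ¬ G.dist x0 v = 0) with hB_def
  have hB1 : B.filter (fun v => G.dist x0 v = 1) = N.filter (fun v => G.dist x0 v = 1) := by
    ext v
    simp only [hB_def, Finset.mem_filter]
    constructor
    · rintro ⟨⟨hv, _⟩, h1⟩; exact ⟨hv, h1⟩
    · rintro ⟨hv, h1⟩; exact ⟨⟨hv, by omega⟩, h1⟩
  have hB2 : B.filter (fun v => ¬ G.dist x0 v = 1) = N.filter (fun v => G.dist x0 v = 2) := by
    ext v
    simp only [hB_def, Finset.mem_filter]
    constructor
    · rintro ⟨⟨hv, h0⟩, h1⟩; exact ⟨hv, by have := hle2 v hv; omega⟩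
    · rintro ⟨hv, h2⟩; exact ⟨⟨hv, by omega⟩, by omega⟩
  have hsum0 : ∑ v ∈ N.filter (fun v => G.dist x0 v = 0), G.dist x0 v = 0 :=
    Finset.sum_eq_zero fun v hv => (Finset.mem_filter.mp hv).2
  have hsum1 : ∑ v ∈ N.filter (fun v => G.dist x0 v = 1), G.dist x0 v
      = (N.filter (fun v => G.dist x0 v = 1)).card := by
    rw [Finset.sum_congr rfl fun v hv => (Finset.mem_filter.mp hv).2]
    simp
  have hsum2 : ∑ v ∈ N.filter (fun v => G.dist x0 v = 2), G.dist x0 v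
      = 2 * (N.filter (fun v => G.dist x0 v = 2)).card := by
    rw [Finset.sum_congr rfl fun v hv => (Finset.mem_filter.mp hv).2]
    simp [mul_comm]
  have s1 := Finset.sum_filter_add_sum_filter_not N (fun v => G.dist x0 v = 0)
    (fun v => G.dist x0 v)
  have s2 := Finset.sum_filter_add_sum_filter_not B (fun v => G.dist x0 v = 1)
    (fun v => G.dist x0 v)
  have c1 := Finset.card_filter_add_card_filter_not (s := N)
    (p := fun v => G.dist x0 v = 0)
  have c2 := Finset.card_filter_add_card_filter_not (s := B)
    (p := fun v => G.dist x0 v = 1)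
  rw [hB1, hB2] at s2 c2
  rw [hA0] at c1
  rw [hsum0, ← hB_def] at s1
  rw [hsum1, hsum2] at s2
  -- name the two sphere degrees
  have hd1 : (N.filter (fun v => G.dist x0 v = 1)).card = sphDeg G x0 x1 1 := by
    unfold sphDeg
    congr 1
    ext v
    simp [hN_def, SimpleGraph.mem_neighborFinset]
  have hd2 : (N.filter (fun v => G.dist x0 v = 2)).card = sphDeg G x0 x1 2 := by
    unfold sphDeg
    congr 1
    ext v
    simp [hN_def, SimpleGraph.mem_neighborFinset]
  have hcardN : N.card = D := hreg x1
  -- total sum over N, cast to ℝ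
  have hSN : Sig1 = (sphDeg G x0 x1 1 : ℝ) + 2 * (sphDeg G x0 x1 2 : ℝ) := by
    have : ∑ v ∈ N, G.dist x0 v = sphDeg G x0 x1 1 + 2 * sphDeg G x0 x1 2 := by
      rw [← s1, ← s2]
      omega
    rw [hSig1_def]
    exact_mod_cast congrArg (fun n : ℕ => (n : ℝ)) this
  have hcards : 1 + (sphDeg G x0 x1 1) + (sphDeg G x0 x1 2) = D := by
    rw [← hd1, ← hd2, ← hcardN, ← c1, ← c2]
    simp
    omega
  have hcards' : 1 + (sphDeg G x0 x1 1 : ℝ) + (sphDeg G x0 x1 2 : ℝ) = (D : ℝ) := by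
    exact_mod_cast congrArg (Nat.cast : ℕ → ℝ) hcards
  have htri : tri G x0 x1 = sphDeg G x0 x1 1 := by
    unfold tri sphDeg
    congr 1
    ext v
    simp only [Finset.mem_filter, Finset.mem_univ, true_and]
    constructor
    · rintro ⟨h0, h1⟩; exact ⟨h1, SimpleGraph.dist_eq_one_iff_adj.mpr h0⟩
    · rintro ⟨h1, h0⟩; exact ⟨SimpleGraph.dist_eq_one_iff_adj.mp h0, h1⟩
  have key1 : (sphDeg G x0 x1 2 : ℝ) = (D : ℝ) - 2 * D / L + 1 := by
    have := hSig1
    rw [hcL] at this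
    linarith [hSN, hcards', this]
  refine ⟨key1, ?_, ?_⟩
  · linarith [hcards', key1]
  · rw [htri]
    linarith [hcards', key1]


end BMS
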